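/- Let β > −1, s₀ ∈ (0, min(1, R²)), p ≥ 1, μ₁ > 0, K > 0, α ≥ 2(p−1), and let μ : [0, R] → [0,∞) satisfy μ(s) ≤ μ₁ s^α. Suppose w ∈ C¹([0, s₀]) is nonnegative, non-decreasing, w(0) = 0, and w'(σ) ≤ K/σ for σ ∈ (0, s₀]. Then 2^{p−1} ∫₀^{s₀} (s₀ − s)^β ∫₀^s μ(√σ) w'(σ)^p dσ ds ≤ (2K)^{p−1} μ₁ ∫₀^{s₀} (s₀ − s)^β w(s) ds. -/

import Mathlib

open Set Real MeasureTheory intervalIntegral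

theorem nonlocal_term_estimate
    (R β s₀ p μ₁ K α : ℝ) (hR : 0 < R) (hβ : β > -1)
    (hs₀ : s₀ ∈ Ioo 0 (min 1 (R^2))) (hp : 1 ≤ p) (hμ₁ : 0 < μ₁) (hK : 0 < K)
    (hα : α ≥ 2 * (p - 1))
    (μ : ℝ → ℝ) (hμnn : ∀ s ∈ Icc 0 R, 0 ≤ μ s)
    (hμ : ∀ s ∈ Icc 0 R, μ s ≤ μ₁ * s ^ α)
    (w w' : ℝ → ℝ)
    (hd : ∀ s ∈ Icc 0 s₀, HasDerivWithinAt w (w' s) (Icc 0 s₀) s)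
    (hc : ContinuousOn w' (Icc 0 s₀))
    (hnonneg : ∀ s ∈ Icc 0 s₀, 0 ≤ w s)
    (hmono : MonotoneOn w (Icc 0 s₀))
    (hw0 : w 0 = 0)
    (hws : ∀ σ ∈ Ioc 0 s₀, w' σ ≤ K / σ) :
    2 ^ (p - 1) * ∫ s in (0:ℝ)..s₀, (s₀ - s) ^ β *
        ∫ σ in (0:ℝ)..s, μ (Real.sqrt σ) * (w' σ) ^ p ≤
      (2 * K) ^ (p - 1) * μ₁ * ∫ s in (0:ℝ)..s₀, (s₀ - s) ^ β * w s := by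
  obtain ⟨hs₀0, hs₀lt⟩ := hs₀
  have hs₀1 : s₀ ≤ 1 := le_of_lt (lt_of_lt_of_le hs₀lt (min_le_left _ _))
  have hs₀R : s₀ ≤ R ^ 2 := le_of_lt (lt_of_lt_of_le hs₀lt (min_le_right _ _))
  set f : ℝ → ℝ := fun σ => μ (Real.sqrt σ) * (w' σ) ^ p with hf
  set C : ℝ := μ₁ * K ^ (p - 1) with hCdef
  have hp1 : (0:ℝ) ≤ p - 1 := by linarith
  have hC0 : 0 ≤ C := mul_nonneg hμ₁.le (Real.rpow_nonneg hK.le _)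
  -- w' is nonnegative on [0, s₀]
  have hw'nn : ∀ σ ∈ Icc 0 s₀, 0 ≤ w' σ := by
    intro σ hσ
    have hslope : Filter.Tendsto (slope w σ) (nhdsWithin σ (Icc 0 s₀ \ {σ}))
        (nhds (w' σ)) := hasDerivWithinAt_iff_tendsto_slope.mp (hd σ hσ)
    rcases lt_or_eq_of_le hσ.2 with hlt | heq
    · have hsub : Ioc σ s₀ ⊆ Icc 0 s₀ \ {σ} := by
        intro t ht; exact ⟨⟨le_trans hσ.1 ht.1.le, ht.2⟩, ne_of_gt ht.1⟩
      have h2 : Filter.Tendsto (slope w σ) (nhdsWithin σ (Ioc σ s₀)) (nhds (w' σ)) :=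
        hslope.mono_left (nhdsWithin_mono _ hsub)
      haveI : (nhdsWithin σ (Ioc σ s₀)).NeBot := by
        rw [nhdsWithin_Ioc_eq_nhdsGT hlt]; infer_instance
      refine ge_of_tendsto h2 ?_
      filter_upwards [self_mem_nhdsWithin] with t ht
      rw [slope_def_field]
      apply div_nonneg _ (by linarith [ht.1])
      have := hmono hσ ⟨le_trans hσ.1 ht.1.le, ht.2⟩ ht.1.le
      linarith
    · subst heq
      have hsub : Ico 0 σ ⊆ Icc 0 σ \ {σ} := by
        intro t ht; exact ⟨⟨ht.1, ht.2.le⟩, ne_of_lt ht.2⟩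
      have h2 : Filter.Tendsto (slope w σ) (nhdsWithin σ (Ico 0 σ)) (nhds (w' σ)) :=
        hslope.mono_left (nhdsWithin_mono _ hsub)
      haveI : (nhdsWithin σ (Ico 0 σ)).NeBot := by
        rw [nhdsWithin_Ico_eq_nhdsLT hs₀0]; infer_instance
      refine ge_of_tendsto h2 ?_
      filter_upwards [self_mem_nhdsWithin] with t ht
      rw [slope_def_field]
      apply div_nonneg_of_nonpos (by
        have := hmono ⟨ht.1, ht.2.le⟩ hσ ht.2.le
        linarith) (by linarith [ht.2])
  have hwc : ContinuousOn w (Icc 0 s₀) := fun x hx => (hd x hx).continuousWithinAt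
  -- pointwise bound f ≤ C * w'
  have hfg : ∀ σ ∈ Icc 0 s₀, f σ ≤ C * w' σ := by
    intro σ hσ
    have hσ1 : σ ≤ 1 := le_trans hσ.2 hs₀1
    have hsqmem : Real.sqrt σ ∈ Icc 0 R := by
      refine ⟨Real.sqrt_nonneg σ, ?_⟩
      calc Real.sqrt σ ≤ Real.sqrt (R ^ 2) := Real.sqrt_le_sqrt (le_trans hσ.2 hs₀R)
        _ = R := by rw [sq, Real.sqrt_mul_self hR.le]
    have hμσnn : 0 ≤ μ (Real.sqrt σ) := hμnn _ hsqmem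
    have hw'σ : 0 ≤ w' σ := hw'nn σ hσ
    rcases eq_or_lt_of_le hp with hpe | hplt
    · -- p = 1
      have hα0 : 0 ≤ α := by nlinarith
      have h1 : μ (Real.sqrt σ) ≤ μ₁ := by
        calc μ (Real.sqrt σ) ≤ μ₁ * (Real.sqrt σ) ^ α := hμ _ hsqmem
          _ ≤ μ₁ * 1 := by
              gcongr
              exact Real.rpow_le_one (Real.sqrt_nonneg σ)
                (by rw [show (1:ℝ) = Real.sqrt 1 by simp]
                    exact Real.sqrt_le_sqrt hσ1) hα0
          _ = μ₁ := mul_one _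
      have : C = μ₁ := by rw [hCdef, ← hpe, sub_self, Real.rpow_zero, mul_one]
      rw [this, hf]
      simp only [← hpe, Real.rpow_one]
      exact mul_le_mul_of_nonneg_right h1 hw'σ
    · rcases eq_or_lt_of_le hσ.1 with h0 | h0
      · -- σ = 0, p > 1 hence α > 0
        have hαpos : 0 < α := by nlinarith
        have hμ0 : μ (Real.sqrt σ) = 0 := by
          have h1 := hμ _ hsqmem
          rw [← h0, Real.sqrt_zero, Real.zero_rpow (ne_of_gt hαpos), mul_zero] at h1
          have h2 := hμnn _ hsqmem
          rw [← h0, Real.sqrt_zero] at h2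
          rw [← h0, Real.sqrt_zero]
          linarith
        simp only [hf]
        rw [hμ0, zero_mul]
        exact mul_nonneg hC0 hw'σ
      · -- 0 < σ
        have hKσ : w' σ ≤ K / σ := hws σ ⟨h0, hσ.2⟩
        have h1 : μ (Real.sqrt σ) ≤ μ₁ * σ ^ (α / 2) := by
          have he : (Real.sqrt σ) ^ α = σ ^ (α / 2) := by
            rw [Real.sqrt_eq_rpow, ← Real.rpow_mul hσ.1]
            congr 1; ring
          calc μ (Real.sqrt σ) ≤ μ₁ * (Real.sqrt σ) ^ α := hμ _ hsqmem
            _ = μ₁ * σ ^ (α / 2) := by rw [he]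
        have h2 : (w' σ) ^ p = (w' σ) ^ (p - 1) * w' σ := by
          rcases eq_or_lt_of_le hw'σ with hz | hz
          · rw [← hz, Real.zero_rpow (by linarith : p ≠ 0), mul_zero]
          · symm
            calc (w' σ) ^ (p - 1) * w' σ
                = (w' σ) ^ (p - 1) * (w' σ) ^ (1:ℝ) := by rw [Real.rpow_one]
              _ = (w' σ) ^ (p - 1 + 1) := (Real.rpow_add hz _ _).symm
              _ = (w' σ) ^ p := by norm_num
        have h3 : (w' σ) ^ (p - 1) ≤ (K / σ) ^ (p - 1) :=
          Real.rpow_le_rpow hw'σ hKσ hp1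
        have h4 : f σ ≤ (μ₁ * σ ^ (α / 2)) * ((K / σ) ^ (p - 1) * w' σ) := by
          simp only [hf]
          rw [h2]
          apply mul_le_mul h1 (mul_le_mul_of_nonneg_right h3 hw'σ)
            (mul_nonneg (Real.rpow_nonneg hw'σ _) hw'σ)
            (mul_nonneg hμ₁.le (Real.rpow_nonneg hσ.1 _))
        have h5 : (μ₁ * σ ^ (α / 2)) * ((K / σ) ^ (p - 1) * w' σ)
            = C * (σ ^ (α / 2 - (p - 1)) * w' σ) := by
          have hratio : σ ^ (α / 2 - (p - 1)) = σ ^ (α / 2) / σ ^ (p - 1) :=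
            Real.rpow_sub h0 _ _
          have hne : σ ^ (p - 1) ≠ 0 := ne_of_gt (Real.rpow_pos_of_pos h0 _)
          rw [Real.div_rpow hK.le hσ.1, hratio, hCdef]
          field_simp
        have h6 : σ ^ (α / 2 - (p - 1)) ≤ 1 :=
          Real.rpow_le_one hσ.1 hσ1 (by linarith)
        calc f σ ≤ C * (σ ^ (α / 2 - (p - 1)) * w' σ) := by rw [← h5]; exact h4
          _ ≤ C * (1 * w' σ) := by
              apply mul_le_mul_of_nonneg_left _ hC0
              exact mul_le_mul_of_nonneg_right h6 hw'σ
          _ = C * w' σ := by rw [one_mul]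
  have hfnn : ∀ σ ∈ Icc 0 s₀, 0 ≤ f σ := by
    intro σ hσ
    have hsqmem : Real.sqrt σ ∈ Icc 0 R := by
      refine ⟨Real.sqrt_nonneg σ, ?_⟩
      calc Real.sqrt σ ≤ Real.sqrt (R ^ 2) := Real.sqrt_le_sqrt (le_trans hσ.2 hs₀R)
        _ = R := by rw [sq, Real.sqrt_mul_self hR.le]
    exact mul_nonneg (hμnn _ hsqmem) (Real.rpow_nonneg (hw'nn σ hσ) _)
  -- FTC : ∫₀ˢ C * w' = C * w s
  have hgint : ∀ s ∈ Icc 0 s₀, IntervalIntegrable (fun σ => C * w' σ) volume 0 s := by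
    intro s hs
    apply ContinuousOn.intervalIntegrable
    apply continuousOn_const.mul (hc.mono ?_)
    rw [uIcc_of_le hs.1]; exact Icc_subset_Icc le_rfl hs.2
  have hFTC : ∀ s ∈ Icc 0 s₀, (∫ σ in (0:ℝ)..s, C * w' σ) = C * w s := by
    intro s hs
    rw [intervalIntegral.integral_const_mul]
    have hsub : (∫ σ in (0:ℝ)..s, w' σ) = w s - w 0 := by
      apply intervalIntegral.integral_eq_sub_of_hasDeriv_right_of_le hs.1
      · exact hwc.mono (Icc_subset_Icc le_rfl hs.2)
      · intro x hx
        have hxm : x ∈ Icc 0 s₀ := ⟨hx.1.le, (hx.2.le.trans hs.2)⟩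
        exact (hd x hxm).mono_of_mem_nhdsWithin
          (Icc_mem_nhdsGT_of_mem ⟨hx.1.le, hx.2.trans_le hs.2⟩)
      · apply ContinuousOn.intervalIntegrable
        apply hc.mono
        rw [uIcc_of_le hs.1]; exact Icc_subset_Icc le_rfl hs.2
    rw [hsub, hw0, sub_zero]
  -- inner bound
  have hinner : ∀ s ∈ Icc 0 s₀, (∫ σ in (0:ℝ)..s, f σ) ≤ C * w s := by
    intro s hs
    by_cases hfi : IntervalIntegrable f volume 0 s
    · rw [← hFTC s hs]
      apply intervalIntegral.integral_mono_on hs.1 hfi (hgint s hs)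
      intro σ hσ; exact hfg σ ⟨hσ.1, hσ.2.trans hs.2⟩
    · rw [intervalIntegral.integral_undef hfi]
      exact mul_nonneg hC0 (hnonneg s hs)
  have hinnernn : ∀ s ∈ Icc 0 s₀, 0 ≤ ∫ σ in (0:ℝ)..s, f σ := by
    intro s hs
    apply intervalIntegral.integral_nonneg hs.1
    intro σ hσ; exact hfnn σ ⟨hσ.1, hσ.2.trans hs.2⟩
  -- outer integrals
  have hβnn : ∀ s ∈ Icc 0 s₀, 0 ≤ (s₀ - s) ^ β := fun s hs =>
    Real.rpow_nonneg (by linarith [hs.2]) β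
  have hβint : IntervalIntegrable (fun s => (s₀ - s) ^ β) volume 0 s₀ := by
    have h := ((intervalIntegrable_rpow' (a := 0) (b := s₀) hβ).comp_sub_left s₀).symm
    simpa using h
  have hHint : IntervalIntegrable (fun s => (s₀ - s) ^ β * (C * w s)) volume 0 s₀ := by
    apply hβint.mul_continuousOn
    apply continuousOn_const.mul
    apply hwc.mono
    rw [uIcc_of_le hs₀0.le]
  have hRHSnn : 0 ≤ ∫ s in (0:ℝ)..s₀, (s₀ - s) ^ β * w s := by
    apply intervalIntegral.integral_nonneg hs₀0.le
    intro s hs; exact mul_nonneg (hβnn s hs) (hnonneg s hs)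
  have h2K : (2 * K) ^ (p - 1) * μ₁ = 2 ^ (p - 1) * C := by
    rw [Real.mul_rpow (by norm_num) hK.le, hCdef]; ring
  have h2nn : (0:ℝ) ≤ 2 ^ (p - 1) := Real.rpow_nonneg (by norm_num) _
  by_cases hhint : IntervalIntegrable
      (fun s => (s₀ - s) ^ β * ∫ σ in (0:ℝ)..s, f σ) volume 0 s₀
  · have key : (∫ s in (0:ℝ)..s₀, (s₀ - s) ^ β * ∫ σ in (0:ℝ)..s, f σ)
        ≤ ∫ s in (0:ℝ)..s₀, (s₀ - s) ^ β * (C * w s) := by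
      apply intervalIntegral.integral_mono_on hs₀0.le hhint hHint
      intro s hs
      exact mul_le_mul_of_nonneg_left (hinner s hs) (hβnn s hs)
    have heq : (∫ s in (0:ℝ)..s₀, (s₀ - s) ^ β * (C * w s))
        = C * ∫ s in (0:ℝ)..s₀, (s₀ - s) ^ β * w s := by
      rw [← intervalIntegral.integral_const_mul]
      congr 1; funext s; ring
    calc 2 ^ (p - 1) * ∫ s in (0:ℝ)..s₀, (s₀ - s) ^ β * ∫ σ in (0:ℝ)..s, f σ
        ≤ 2 ^ (p - 1) * (C * ∫ s in (0:ℝ)..s₀, (s₀ - s) ^ β * w s) :=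
          mul_le_mul_of_nonneg_left (le_of_le_of_eq key heq) h2nn
      _ = (2 * K) ^ (p - 1) * μ₁ * ∫ s in (0:ℝ)..s₀, (s₀ - s) ^ β * w s := by
          rw [h2K]; ring
  · rw [intervalIntegral.integral_undef hhint, mul_zero]
    exact mul_nonneg (mul_nonneg (Real.rpow_nonneg (by positivity) _) hμ₁.le) hRHSnn
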